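/- arXiv:1101.4207 — 3 statements merged into one kernel-verified Lean document; each statement's English description precedes it below -/
import Mathlib

section
/- The function x ↦ L_{1/2}(−x) = e^{−x/2}[(1+x)I_0(x/2) + x I_1(x/2)] is strictly concave on [0, ∞), where I_0 and I_1 are modified Bessel functions of the first kind. -/
/-- Modified Bessel function of the first kind of order 0, via its power series. -/
noncomputable def besselI0 (x : ℝ) : ℝ :=
  ∑' m : ℕ, (x / 2) ^ (2 * m) / ((Nat.factorial m : ℝ) ^ 2)

/-- Modified Bessel function of the first kind of order 1, via its power series. -/
noncomputable def besselI1 (x : ℝ) : ℝ :=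
  ∑' m : ℕ, (x / 2) ^ (2 * m + 1) / ((Nat.factorial m : ℝ) * (Nat.factorial (m + 1) : ℝ))

/-- x ↦ L_{1/2}(−x) = e^{−x/2}[(1+x)I_0(x/2) + x I_1(x/2)]. -/
noncomputable def LhalfNeg (x : ℝ) : ℝ :=
  Real.exp (-x / 2) * ((1 + x) * besselI0 (x / 2) + x * besselI1 (x / 2))

/-- Auxiliary series: `I_1(x)/x`. -/
noncomputable def besselD (x : ℝ) : ℝ :=
  ∑' m : ℕ, (x / 2) ^ (2 * m) / (2 * (Nat.factorial m : ℝ) * (Nat.factorial (m + 1) : ℝ))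

lemma pow_two_mul_nonneg (x : ℝ) (m : ℕ) : 0 ≤ x ^ (2 * m) := by
  rw [pow_mul]; positivity

lemma summable_master (q : ℝ) (hq : 0 ≤ q) :
    Summable (fun m : ℕ => (m + 1 : ℝ) * q ^ m / (Nat.factorial m : ℝ)) := by
  refine Summable.of_nonneg_of_le (fun m => by positivity) (fun m => ?_)
    (Real.summable_pow_div_factorial (2 * q))
  rw [mul_pow]
  have h2 : (m + 1 : ℝ) ≤ 2 ^ m := by
    exact_mod_cast Nat.lt_two_pow_self (n := m)
  gcongr

lemma fact_pos_real (m : ℕ) : (0 : ℝ) < (Nat.factorial m : ℝ) := by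
  exact_mod_cast Nat.factorial_pos m

lemma one_le_fact_real (m : ℕ) : (1 : ℝ) ≤ (Nat.factorial m : ℝ) := by
  exact_mod_cast Nat.one_le_iff_ne_zero.mpr (Nat.factorial_pos m).ne'

lemma summable_I0 (x : ℝ) :
    Summable (fun m : ℕ => (x / 2) ^ (2 * m) / ((Nat.factorial m : ℝ) ^ 2)) := by
  refine Summable.of_nonneg_of_le
    (fun m => by have := pow_two_mul_nonneg (x / 2) m; positivity) (fun m => ?_)
    (summable_master ((x / 2) ^ 2) (by positivity))
  rw [pow_mul]
  have h1 := fact_pos_real m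
  have h2 := one_le_fact_real m
  have h4 : (0:ℝ) ≤ ((x / 2) ^ 2) ^ m := by positivity
  calc ((x / 2) ^ 2) ^ m / (Nat.factorial m : ℝ) ^ 2
      ≤ ((x / 2) ^ 2) ^ m / (Nat.factorial m : ℝ) := by
        gcongr
        nlinarith
    _ ≤ (m + 1 : ℝ) * ((x / 2) ^ 2) ^ m / (Nat.factorial m : ℝ) := by
        rw [mul_div_assoc]
        exact le_mul_of_one_le_left (by positivity) (by push_cast; linarith [Nat.cast_nonneg (α := ℝ) m])

lemma summable_D (x : ℝ) :
    Summable (fun m : ℕ =>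
      (x / 2) ^ (2 * m) / (2 * (Nat.factorial m : ℝ) * (Nat.factorial (m + 1) : ℝ))) := by
  refine Summable.of_nonneg_of_le
    (fun m => by have := pow_two_mul_nonneg (x / 2) m; positivity) (fun m => ?_)
    (summable_master ((x / 2) ^ 2) (by positivity))
  rw [pow_mul]
  have h1 := fact_pos_real m
  have h2 := one_le_fact_real m
  have h3 := one_le_fact_real (m + 1)
  have h4 : (0:ℝ) ≤ ((x / 2) ^ 2) ^ m := by positivity
  calc ((x / 2) ^ 2) ^ m / (2 * (Nat.factorial m : ℝ) * (Nat.factorial (m + 1) : ℝ))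
      ≤ ((x / 2) ^ 2) ^ m / (Nat.factorial m : ℝ) := by
        gcongr
        nlinarith
    _ ≤ (m + 1 : ℝ) * ((x / 2) ^ 2) ^ m / (Nat.factorial m : ℝ) := by
        rw [mul_div_assoc]
        exact le_mul_of_one_le_left (by positivity) (by push_cast; linarith [Nat.cast_nonneg (α := ℝ) m])

lemma besselD_pos (x : ℝ) : 0 < besselD x := by
  unfold besselD
  refine Summable.tsum_pos (summable_D x) (fun m => by have := pow_two_mul_nonneg (x / 2) m; positivity) 0 ?_
  norm_num [Nat.factorial]

lemma hasDerivAt_besselI0 (x : ℝ) : HasDerivAt besselI0 (besselI1 x) x := by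
  set R : ℝ := |x| + 2 with hR
  have hRpos : (0 : ℝ) < R := by positivity
  have hR2 : (1 : ℝ) ≤ R / 2 := by
    have := abs_nonneg x; rw [hR]; linarith
  have hxball : x ∈ Metric.ball (0 : ℝ) R := by
    simp only [Metric.mem_ball, dist_zero_right, Real.norm_eq_abs, hR]; linarith
  have hu : Summable (fun m : ℕ => (m + 1 : ℝ) * ((R / 2) ^ 2) ^ m / (Nat.factorial m : ℝ)) :=
    summable_master _ (by positivity)
  have hbound : ∀ (m : ℕ) (y : ℝ), y ∈ Metric.ball (0 : ℝ) R →
      ‖(2 * m : ℕ) * (y / 2) ^ (2 * m - 1) * (1 / 2) / ((Nat.factorial m : ℝ) ^ 2)‖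
        ≤ (m + 1 : ℝ) * ((R / 2) ^ 2) ^ m / (Nat.factorial m : ℝ) := by
    intro m y hy
    have hyR : |y| / 2 ≤ R / 2 := by
      simp only [Metric.mem_ball, dist_zero_right, Real.norm_eq_abs] at hy
      linarith
    have h1 := fact_pos_real m
    have h2 := one_le_fact_real m
    rw [norm_div, norm_mul, norm_mul, norm_pow]
    simp only [Real.norm_eq_abs, abs_pow, Nat.abs_cast, abs_div, abs_one, abs_two, sq_abs]
    calc (2 * m : ℕ) * (|y| / 2) ^ (2 * m - 1) * (1 / 2) / ((Nat.factorial m : ℝ) ^ 2)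
        ≤ (2 * m : ℕ) * (R / 2) ^ (2 * m - 1) * (1 / 2) / ((Nat.factorial m : ℝ) ^ 2) := by
          gcongr
      _ ≤ (2 * m : ℕ) * (R / 2) ^ (2 * m) * (1 / 2) / ((Nat.factorial m : ℝ) ^ 2) := by
          gcongr
          · omega
      _ ≤ (m + 1 : ℝ) * ((R / 2) ^ 2) ^ m / (Nat.factorial m : ℝ) := by
          rw [← pow_mul]
          have hRm : (0:ℝ) ≤ (R / 2) ^ (2 * m) := by positivity
          have hfm : (Nat.factorial m : ℝ) ≤ (Nat.factorial m : ℝ) ^ 2 := by nlinarith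
          have key : ((2 * m : ℕ) : ℝ) * (1 / 2) ≤ (m + 1 : ℝ) := by push_cast; linarith
          calc ((2 * m : ℕ) : ℝ) * (R / 2) ^ (2 * m) * (1 / 2) / ((Nat.factorial m : ℝ) ^ 2)
              ≤ ((2 * m : ℕ) : ℝ) * (R / 2) ^ (2 * m) * (1 / 2) / (Nat.factorial m : ℝ) := by
                gcongr
            _ = (((2 * m : ℕ) : ℝ) * (1 / 2)) * (R / 2) ^ (2 * m) / (Nat.factorial m : ℝ) := by
                ring
            _ ≤ (m + 1 : ℝ) * (R / 2) ^ (2 * m) / (Nat.factorial m : ℝ) := by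
                gcongr
  have key : HasDerivAt (fun z : ℝ => ∑' m : ℕ, (z / 2) ^ (2 * m) / ((Nat.factorial m : ℝ) ^ 2))
      (∑' m : ℕ, (2 * m : ℕ) * (x / 2) ^ (2 * m - 1) * (1 / 2) / ((Nat.factorial m : ℝ) ^ 2))
      x := by
    refine hasDerivAt_tsum_of_isPreconnected hu Metric.isOpen_ball
      (convex_ball (0:ℝ) R).isPreconnected
      (fun m y _ => (((hasDerivAt_id y).div_const 2).pow (2*m)).div_const _)
      hbound (Metric.mem_ball_self hRpos) ?_ hxball
    simpa using summable_I0 0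
  have hsum : Summable (fun m : ℕ =>
      (2 * m : ℕ) * (x / 2) ^ (2 * m - 1) * (1 / 2) / ((Nat.factorial m : ℝ) ^ 2)) :=
    Summable.of_norm_bounded hu (fun m => hbound m x hxball)
  have heq : (∑' m : ℕ, (2 * m : ℕ) * (x / 2) ^ (2 * m - 1) * (1 / 2) / ((Nat.factorial m : ℝ) ^ 2))
      = besselI1 x := by
    rw [hsum.tsum_eq_zero_add]
    simp only [Nat.mul_zero, Nat.cast_zero, zero_mul, zero_div, zero_add]
    unfold besselI1
    refine tsum_congr fun m => ?_
    have h1 := fact_pos_real m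
    have h2 := fact_pos_real (m + 1)
    have hfs : (Nat.factorial (m + 1) : ℝ) = (m + 1) * Nat.factorial m := by
      rw [Nat.factorial_succ]; push_cast; ring
    have hexp : 2 * (m + 1) - 1 = 2 * m + 1 := by omega
    rw [hexp, hfs]
    push_cast
    field_simp
  rw [heq] at key
  exact key

lemma hasDerivAt_besselI1 (x : ℝ) : HasDerivAt besselI1 (besselI0 x - besselD x) x := by
  set R : ℝ := |x| + 2 with hR
  have hRpos : (0 : ℝ) < R := by positivity
  have hR2 : (1 : ℝ) ≤ R / 2 := by
    have := abs_nonneg x; rw [hR]; linarith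
  have hxball : x ∈ Metric.ball (0 : ℝ) R := by
    simp only [Metric.mem_ball, dist_zero_right, Real.norm_eq_abs, hR]; linarith
  have hu : Summable (fun m : ℕ => (m + 1 : ℝ) * ((R / 2) ^ 2) ^ m / (Nat.factorial m : ℝ)) :=
    summable_master _ (by positivity)
  have hbound : ∀ (m : ℕ) (y : ℝ), y ∈ Metric.ball (0 : ℝ) R →
      ‖(2 * m + 1 : ℕ) * (y / 2) ^ (2 * m) * (1 / 2) /
          ((Nat.factorial m : ℝ) * (Nat.factorial (m + 1) : ℝ))‖
        ≤ (m + 1 : ℝ) * ((R / 2) ^ 2) ^ m / (Nat.factorial m : ℝ) := by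
    intro m y hy
    have hyR : |y| / 2 ≤ R / 2 := by
      simp only [Metric.mem_ball, dist_zero_right, Real.norm_eq_abs] at hy
      linarith
    have h1 := fact_pos_real m
    have h2 := fact_pos_real (m + 1)
    have h3 := one_le_fact_real (m + 1)
    rw [norm_div, norm_mul, norm_mul, norm_pow]
    simp only [Real.norm_eq_abs, abs_pow, Nat.abs_cast, abs_div, abs_one, abs_two, abs_mul,
      abs_of_pos h1, abs_of_pos h2]
    calc (2 * m + 1 : ℕ) * (|y| / 2) ^ (2 * m) * (1 / 2) /
            ((Nat.factorial m : ℝ) * (Nat.factorial (m + 1) : ℝ))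
        ≤ (2 * m + 1 : ℕ) * (R / 2) ^ (2 * m) * (1 / 2) /
            ((Nat.factorial m : ℝ) * (Nat.factorial (m + 1) : ℝ)) := by
          gcongr
      _ ≤ (2 * m + 1 : ℕ) * (R / 2) ^ (2 * m) * (1 / 2) / (Nat.factorial m : ℝ) := by
          gcongr
          nlinarith
      _ = ((2 * m + 1 : ℕ) * (1 / 2)) * (R / 2) ^ (2 * m) / (Nat.factorial m : ℝ) := by
          ring
      _ ≤ (m + 1 : ℝ) * ((R / 2) ^ 2) ^ m / (Nat.factorial m : ℝ) := by
          rw [← pow_mul]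
          gcongr
          push_cast; linarith
  have key : HasDerivAt
      (fun z : ℝ => ∑' m : ℕ,
        (z / 2) ^ (2 * m + 1) / ((Nat.factorial m : ℝ) * (Nat.factorial (m + 1) : ℝ)))
      (∑' m : ℕ, (2 * m + 1 : ℕ) * (x / 2) ^ (2 * m) * (1 / 2) /
        ((Nat.factorial m : ℝ) * (Nat.factorial (m + 1) : ℝ))) x := by
    refine hasDerivAt_tsum_of_isPreconnected hu Metric.isOpen_ball
      (convex_ball (0:ℝ) R).isPreconnected
      (fun m y _ => ?_)
      hbound (Metric.mem_ball_self hRpos) ?_ hxball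
    · have h := (((hasDerivAt_id y).div_const 2).pow (2*m+1)).div_const
        ((Nat.factorial m : ℝ) * (Nat.factorial (m + 1) : ℝ))
      simpa using h
    · apply summable_of_ne_finset_zero (s := (∅ : Finset ℕ))
      intro m _
      norm_num
  have heq : (∑' m : ℕ, (2 * m + 1 : ℕ) * (x / 2) ^ (2 * m) * (1 / 2) /
        ((Nat.factorial m : ℝ) * (Nat.factorial (m + 1) : ℝ)))
      = besselI0 x - besselD x := by
    unfold besselI0 besselD
    rw [← Summable.tsum_sub (summable_I0 x) (summable_D x)]
    refine tsum_congr fun m => ?_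
    have h1 := fact_pos_real m
    have h2 := fact_pos_real (m + 1)
    have hfs : (Nat.factorial (m + 1) : ℝ) = (m + 1) * Nat.factorial m := by
      rw [Nat.factorial_succ]; push_cast; ring
    rw [hfs]
    push_cast
    field_simp
    ring
  rw [heq] at key
  exact key

lemma besselI1_eq (x : ℝ) : besselI1 x = x * besselD x := by
  unfold besselI1 besselD
  rw [← tsum_mul_left]
  refine tsum_congr fun m => ?_
  have h1 := fact_pos_real m
  have h2 := fact_pos_real (m + 1)
  rw [pow_succ]
  field_simp

lemma hasDerivAt_half (x : ℝ) : HasDerivAt (fun y : ℝ => y / 2) (1 / 2 : ℝ) x := by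
  simpa using (hasDerivAt_id x).div_const 2

lemma hasDerivAt_I0_half (x : ℝ) :
    HasDerivAt (fun y : ℝ => besselI0 (y / 2)) (besselI1 (x / 2) * (1 / 2)) x :=
  (hasDerivAt_besselI0 (x / 2)).comp (h := fun y : ℝ => y / 2) x (hasDerivAt_half x)

lemma hasDerivAt_I1_half (x : ℝ) :
    HasDerivAt (fun y : ℝ => besselI1 (y / 2))
      ((besselI0 (x / 2) - besselD (x / 2)) * (1 / 2)) x :=
  (hasDerivAt_besselI1 (x / 2)).comp (h := fun y : ℝ => y / 2) x (hasDerivAt_half x)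

lemma hasDerivAt_exp_neg_half (x : ℝ) :
    HasDerivAt (fun y : ℝ => Real.exp (-y / 2)) (Real.exp (-x / 2) * (-1 / 2)) x := by
  have h : HasDerivAt (fun y : ℝ => -y / 2) ((-1 : ℝ) / 2) x := by
    simpa using ((hasDerivAt_id x).neg.div_const 2)
  exact h.exp

lemma hasDerivAt_LhalfNeg (x : ℝ) :
    HasDerivAt LhalfNeg (Real.exp (-x / 2) * (besselI0 (x / 2) + besselI1 (x / 2)) / 2) x := by
  have hu : HasDerivAt (fun y : ℝ => (1 + y) * besselI0 (y / 2) + y * besselI1 (y / 2))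
      ((1 : ℝ) * besselI0 (x / 2) + (1 + x) * (besselI1 (x / 2) * (1 / 2))
        + ((1 : ℝ) * besselI1 (x / 2)
            + x * ((besselI0 (x / 2) - besselD (x / 2)) * (1 / 2)))) x := by
    have h0 := ((((hasDerivAt_const x (1:ℝ)).add (hasDerivAt_id' x)).mul
      (hasDerivAt_I0_half x)).add ((hasDerivAt_id' x).mul (hasDerivAt_I1_half x)))
    simp at h0
    exact h0.congr_deriv (by ring)
  have h := (hasDerivAt_exp_neg_half x).mul hu
  have hb : besselI1 (x / 2) = (x / 2) * besselD (x / 2) := besselI1_eq (x / 2)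
  unfold LhalfNeg
  exact h.congr_deriv (by linear_combination (Real.exp (-x / 2)) * hb)

lemma hasDerivAt_deriv_LhalfNeg (x : ℝ) :
    HasDerivAt (fun y : ℝ => Real.exp (-y / 2) * (besselI0 (y / 2) + besselI1 (y / 2)) / 2)
      (-(Real.exp (-x / 2) * besselD (x / 2) / 4)) x := by
  have h := ((hasDerivAt_exp_neg_half x).mul
    ((hasDerivAt_I0_half x).add (hasDerivAt_I1_half x))).div_const 2
  exact h.congr_deriv (by simp only [Pi.add_apply]; ring)

theorem LhalfNeg_strictConcaveOn : StrictConcaveOn ℝ (Set.Ici (0 : ℝ)) LhalfNeg := by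
  apply strictConcaveOn_of_deriv2_neg' (convex_Ici 0)
  · exact (Continuous.continuousOn (continuous_iff_continuousAt.2
      (fun x => (hasDerivAt_LhalfNeg x).differentiableAt.continuousAt)))
  · intro x _
    have h1 : deriv LhalfNeg =
        fun y : ℝ => Real.exp (-y / 2) * (besselI0 (y / 2) + besselI1 (y / 2)) / 2 :=
      funext fun y => (hasDerivAt_LhalfNeg y).deriv
    show deriv (deriv LhalfNeg) x < 0
    rw [h1, (hasDerivAt_deriv_LhalfNeg x).deriv]
    have := besselD_pos (x / 2)
    have := Real.exp_pos (-x / 2)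
    nlinarith
end

section
/- Define U(ρ) = ρ I_0(ρ/2)² − ρ I_1(ρ/2)² − 2 I_0(ρ/2) I_1(ρ/2). Then U(0) = 0 and U(ρ) > 0 for all ρ > 0. -/
open Finset

/-- U(ρ) = ρ I_0(ρ/2)² − ρ I_1(ρ/2)² − 2 I_0(ρ/2) I_1(ρ/2). -/
noncomputable def Ufun (ρ : ℝ) : ℝ :=
  ρ * besselI0 (ρ / 2) ^ 2 - ρ * besselI1 (ρ / 2) ^ 2 - 2 * besselI0 (ρ / 2) * besselI1 (ρ / 2)

open Finset

-- Vandermonde-evaluated antidiagonal sums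
lemma sumA (t : ℝ) (n : ℕ) :
    ∑ ij ∈ antidiagonal n,
      (t ^ (2*ij.1) / (Nat.factorial ij.1 : ℝ)^2) * (t ^ (2*ij.2) / (Nat.factorial ij.2 : ℝ)^2)
    = ((n+n).choose n : ℝ) * t^(2*n) / (Nat.factorial n : ℝ)^2 := by
  rw [Nat.add_choose_eq, Nat.cast_sum, Finset.sum_mul, Finset.sum_div]
  refine Finset.sum_congr rfl fun ij hij => ?_
  obtain ⟨i, j⟩ := ij
  rw [Finset.HasAntidiagonal.mem_antidiagonal] at hij
  simp only at *
  have hi : i ≤ n := by omega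
  have hj : j ≤ n := by omega
  push_cast
  rw [Nat.cast_choose ℝ hi, Nat.cast_choose ℝ hj]
  have h1 : n - i = j := by omega
  have h2 : n - j = i := by omega
  rw [h1, h2]
  have h3 : t ^ (2*n) = t ^ (2*i) * t^(2*j) := by rw [← pow_add]; congr 1; omega
  rw [h3]
  have f0 : (Nat.factorial i : ℝ) ≠ 0 := Nat.cast_ne_zero.2 (Nat.factorial_ne_zero i)
  have f1 : (Nat.factorial j : ℝ) ≠ 0 := Nat.cast_ne_zero.2 (Nat.factorial_ne_zero j)
  have f2 : (Nat.factorial n : ℝ) ≠ 0 := Nat.cast_ne_zero.2 (Nat.factorial_ne_zero n)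
  field_simp
open Finset

lemma sumC (t : ℝ) (n : ℕ) :
    ∑ ij ∈ antidiagonal n,
      (t ^ (2*ij.1) / (Nat.factorial ij.1 : ℝ)^2) *
      (t ^ (2*ij.2+1) / ((Nat.factorial ij.2 : ℝ) * (Nat.factorial (ij.2+1) : ℝ)))
    = ((n+1+n).choose n : ℝ) * t^(2*n+1) / ((Nat.factorial n : ℝ) * (Nat.factorial (n+1) : ℝ)) := by
  rw [Nat.add_choose_eq, Nat.cast_sum, Finset.sum_mul, Finset.sum_div]
  refine Finset.sum_congr rfl fun ij hij => ?_
  obtain ⟨i, j⟩ := ij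
  rw [Finset.HasAntidiagonal.mem_antidiagonal] at hij
  simp only at *
  have hi : i ≤ n + 1 := by omega
  have hj : j ≤ n := by omega
  push_cast
  rw [Nat.cast_choose ℝ hi, Nat.cast_choose ℝ hj]
  have h1 : n + 1 - i = j + 1 := by omega
  have h2 : n - j = i := by omega
  rw [h1, h2]
  have h3 : t ^ (2*n+1) = t ^ (2*i) * t^(2*j+1) := by rw [← pow_add]; congr 1; omega
  rw [h3]
  have f0 : (Nat.factorial i : ℝ) ≠ 0 := Nat.cast_ne_zero.2 (Nat.factorial_ne_zero i)
  have f1 : (Nat.factorial j : ℝ) ≠ 0 := Nat.cast_ne_zero.2 (Nat.factorial_ne_zero j)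
  have f2 : (Nat.factorial n : ℝ) ≠ 0 := Nat.cast_ne_zero.2 (Nat.factorial_ne_zero n)
  have f3 : (Nat.factorial (n+1) : ℝ) ≠ 0 := Nat.cast_ne_zero.2 (Nat.factorial_ne_zero (n+1))
  have f4 : (Nat.factorial (j+1) : ℝ) ≠ 0 := Nat.cast_ne_zero.2 (Nat.factorial_ne_zero (j+1))
  field_simp

lemma sumB (t : ℝ) (m : ℕ) :
    ∑ ij ∈ antidiagonal m,
      (t ^ (2*ij.1+1) / ((Nat.factorial ij.1 : ℝ) * (Nat.factorial (ij.1+1) : ℝ))) *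
      (t ^ (2*ij.2+1) / ((Nat.factorial ij.2 : ℝ) * (Nat.factorial (ij.2+1) : ℝ)))
    = ((m+1+(m+1)).choose m : ℝ) * t^(2*m+2) / ((Nat.factorial (m+1) : ℝ))^2 := by
  rw [Nat.add_choose_eq, Nat.cast_sum, Finset.sum_mul, Finset.sum_div]
  refine Finset.sum_congr rfl fun ij hij => ?_
  obtain ⟨i, j⟩ := ij
  rw [Finset.HasAntidiagonal.mem_antidiagonal] at hij
  simp only at *
  have hi : i ≤ m + 1 := by omega
  have hj : j ≤ m + 1 := by omega
  push_cast
  rw [Nat.cast_choose ℝ hi, Nat.cast_choose ℝ hj]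
  have h1 : m + 1 - i = j + 1 := by omega
  have h2 : m + 1 - j = i + 1 := by omega
  rw [h1, h2]
  have h3 : t ^ (2*m+2) = t ^ (2*i+1) * t^(2*j+1) := by rw [← pow_add]; congr 1; omega
  rw [h3]
  have f0 : (Nat.factorial i : ℝ) ≠ 0 := Nat.cast_ne_zero.2 (Nat.factorial_ne_zero i)
  have f1 : (Nat.factorial j : ℝ) ≠ 0 := Nat.cast_ne_zero.2 (Nat.factorial_ne_zero j)
  have f4 : (Nat.factorial (j+1) : ℝ) ≠ 0 := Nat.cast_ne_zero.2 (Nat.factorial_ne_zero (j+1))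
  have f5 : (Nat.factorial (i+1) : ℝ) ≠ 0 := Nat.cast_ne_zero.2 (Nat.factorial_ne_zero (i+1))
  have f6 : (Nat.factorial (m+1) : ℝ) ≠ 0 := Nat.cast_ne_zero.2 (Nat.factorial_ne_zero (m+1))
  field_simp

lemma aux_norm0 (t : ℝ) :
    Summable (fun m : ℕ => ‖t ^ (2*m) / ((Nat.factorial m : ℝ))^2‖) := by
  apply Summable.of_nonneg_of_le (fun m => norm_nonneg _) (fun m => ?_)
    (Real.summable_pow_div_factorial (t^2))
  have hf : (1:ℝ) ≤ (Nat.factorial m : ℝ) :=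
    by exact_mod_cast Nat.one_le_iff_ne_zero.2 (Nat.factorial_ne_zero m)
  have h1 : ‖t ^ (2*m) / ((Nat.factorial m : ℝ))^2‖
      = (t^2)^m / ((Nat.factorial m : ℝ))^2 := by
    rw [Real.norm_eq_abs, abs_div, abs_pow, pow_mul, sq_abs,
      abs_of_nonneg (by positivity : (0:ℝ) ≤ ((Nat.factorial m : ℝ))^2)]
  rw [h1]
  gcongr <;> nlinarith [pow_nonneg (sq_nonneg t) m]
lemma aux_norm1 (t : ℝ) :
    Summable (fun m : ℕ =>
      ‖t ^ (2*m+1) / ((Nat.factorial m : ℝ) * (Nat.factorial (m+1) : ℝ))‖) := by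
  apply Summable.of_nonneg_of_le (fun m => norm_nonneg _) (fun m => ?_)
    ((Real.summable_pow_div_factorial (t^2)).mul_left |t|)
  have hf : (1:ℝ) ≤ (Nat.factorial m : ℝ) :=
    by exact_mod_cast Nat.one_le_iff_ne_zero.2 (Nat.factorial_ne_zero m)
  have hf1 : (1:ℝ) ≤ (Nat.factorial (m+1) : ℝ) :=
    by exact_mod_cast Nat.one_le_iff_ne_zero.2 (Nat.factorial_ne_zero (m+1))
  have h1 : ‖t ^ (2*m+1) / ((Nat.factorial m : ℝ) * (Nat.factorial (m+1) : ℝ))‖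
      = |t| * (t^2)^m / ((Nat.factorial m : ℝ) * (Nat.factorial (m+1) : ℝ)) := by
    rw [Real.norm_eq_abs, abs_div, abs_mul, Nat.abs_cast, Nat.abs_cast]
    congr 1
    have h2 : t^(2*m+1) = t * (t^2)^m := by rw [← pow_mul]; ring
    rw [h2, abs_mul, abs_of_nonneg (pow_nonneg (sq_nonneg t) m)]
  rw [h1, mul_div_assoc]
  gcongr <;> nlinarith [pow_nonneg (sq_nonneg t) m, abs_nonneg t]

section main
variable (t : ℝ)

noncomputable def coA (n : ℕ) : ℝ :=
  ((n+n).choose n : ℝ) * t^(2*n) / ((Nat.factorial n : ℝ))^2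
noncomputable def coB (n : ℕ) : ℝ :=
  ((n+1+(n+1)).choose n : ℝ) * t^(2*n+2) / ((Nat.factorial (n+1) : ℝ))^2
noncomputable def coC (n : ℕ) : ℝ :=
  ((n+1+n).choose n : ℝ) * t^(2*n+1) / ((Nat.factorial n : ℝ) * (Nat.factorial (n+1) : ℝ))

noncomputable def coW (n : ℕ) : ℝ :=
  4*t*coA t n - 2*coC t n - (if n = 0 then 0 else 4*t*coB t (n-1))

lemma coW_eq (n : ℕ) :
    coW t n = 2 * ((Nat.factorial (2*n) : ℝ)
      / (((Nat.factorial n : ℝ))^2 * ((Nat.factorial (n+1) : ℝ))^2)) * t^(2*n+1) := by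
  rcases n with _ | m
  · simp [coW, coA, coC, Nat.factorial]
    ring
  · have c1 := Nat.cast_choose ℝ (show m+1 ≤ m+1+(m+1) by omega)
    have c2 := Nat.cast_choose ℝ (show m+1 ≤ m+1+1+(m+1) by omega)
    have c3 := Nat.cast_choose ℝ (show m ≤ m+1+(m+1) by omega)
    simp only [show m+1+(m+1) = 2*m+2 from by omega,
      show m+1+1+(m+1) = 2*m+3 from by omega] at c1 c2 c3
    simp only [show 2*m+2 - (m+1) = m+1 from by omega,
      show 2*m+3 - (m+1) = m+2 from by omega,
      show 2*m+2 - m = m+2 from by omega] at c1 c2 c3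
    simp only [coW, coA, coB, coC, if_neg (Nat.succ_ne_zero m), Nat.add_sub_cancel,
      show m+1+(m+1) = 2*m+2 from by omega, show m+1+1+(m+1) = 2*m+3 from by omega,
      show 2*(m+1) = 2*m+2 from by omega,
      show m+1+1 = m+2 from by omega]
    rw [c1, c2, c3]
    have r1 : (Nat.factorial (m+2) : ℝ) = (m+2) * (Nat.factorial (m+1) : ℝ) := by
      rw [show m+2 = (m+1)+1 from rfl, Nat.factorial_succ]; push_cast; ring
    have r2 : (Nat.factorial (m+1) : ℝ) = (m+1) * (Nat.factorial m : ℝ) := by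
      rw [Nat.factorial_succ]; push_cast; ring
    have r3 : (Nat.factorial (2*m+3) : ℝ) = (2*m+3) * (Nat.factorial (2*m+2) : ℝ) := by
      rw [show 2*m+3 = (2*m+2)+1 from rfl, Nat.factorial_succ]; push_cast; ring
    rw [r1, r3, r2]
    have f0 : (Nat.factorial m : ℝ) ≠ 0 := Nat.cast_ne_zero.2 (Nat.factorial_ne_zero m)
    have f1 : (0:ℝ) < (m:ℝ) + 1 := by positivity
    have f2 : (0:ℝ) < (m:ℝ) + 2 := by positivity
    field_simp
    ring

end main

theorem Ufun_pos : Ufun 0 = 0 ∧ ∀ ρ : ℝ, 0 < ρ → 0 < Ufun ρ := by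
  constructor
  · have h1 : besselI1 0 = 0 := by
      simp [besselI1]
    simp [Ufun, h1]
  · intro ρ hρ
    set t : ℝ := ρ / 4 with ht_def
    have ht : 0 < t := by positivity
    -- the two basic series
    have hI0 : besselI0 (ρ/2) = ∑' m : ℕ, t ^ (2*m) / ((Nat.factorial m : ℝ))^2 := by
      unfold besselI0
      congr 1
      funext m
      rw [show ρ/2/2 = t from by rw [ht_def]; ring]
    have hI1 : besselI1 (ρ/2)
        = ∑' m : ℕ, t ^ (2*m+1) / ((Nat.factorial m : ℝ) * (Nat.factorial (m+1) : ℝ)) := by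
      unfold besselI1
      congr 1
      funext m
      rw [show ρ/2/2 = t from by rw [ht_def]; ring]
    -- Cauchy products
    have hA : besselI0 (ρ/2) * besselI0 (ρ/2) = ∑' n, coA t n := by
      rw [hI0, tsum_mul_tsum_eq_tsum_sum_antidiagonal_of_summable_norm
        (aux_norm0 t) (aux_norm0 t)]
      exact tsum_congr (fun n => sumA t n)
    have hB : besselI1 (ρ/2) * besselI1 (ρ/2) = ∑' n, coB t n := by
      rw [hI1, tsum_mul_tsum_eq_tsum_sum_antidiagonal_of_summable_norm
        (aux_norm1 t) (aux_norm1 t)]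
      exact tsum_congr (fun n => sumB t n)
    have hC : besselI0 (ρ/2) * besselI1 (ρ/2) = ∑' n, coC t n := by
      rw [hI0, hI1, tsum_mul_tsum_eq_tsum_sum_antidiagonal_of_summable_norm
        (aux_norm0 t) (aux_norm1 t)]
      exact tsum_congr (fun n => sumC t n)
    -- summability of the coefficient series
    have hsA : Summable (coA t) := by
      have := summable_sum_mul_antidiagonal_of_summable_mul
        (summable_mul_of_summable_norm (aux_norm0 t) (aux_norm0 t))
      exact this.congr (fun n => sumA t n)
    have hsB : Summable (coB t) := by
      have := summable_sum_mul_antidiagonal_of_summable_mul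
        (summable_mul_of_summable_norm (aux_norm1 t) (aux_norm1 t))
      exact this.congr (fun n => sumB t n)
    have hsC : Summable (coC t) := by
      have := summable_sum_mul_antidiagonal_of_summable_mul
        (summable_mul_of_summable_norm (aux_norm0 t) (aux_norm1 t))
      exact this.congr (fun n => sumC t n)
    -- the shifted B series
    set SQ : ℕ → ℝ := fun n => if n = 0 then 0 else 4*t*coB t (n-1) with hSQ_def
    have hSQshift : (fun n => SQ (n+1)) = fun n => 4*t*coB t n := by
      funext n; simp [hSQ_def]
    have hsSQ : Summable SQ := by
      rw [← summable_nat_add_iff 1, hSQshift]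
      exact hsB.mul_left _
    have hSQsum : ∑' n, SQ n = 4*t*∑' n, coB t n := by
      rw [Summable.tsum_eq_zero_add hsSQ]
      simp only [hSQshift]
      simp [hSQ_def, tsum_mul_left]
    -- summability of W
    have hsW : Summable (coW t) := by
      have : coW t = fun n => (4*t*coA t n - 2*coC t n) - SQ n := by
        funext n; rfl
      rw [this]
      exact (((hsA.mul_left (4*t)).sub (hsC.mul_left 2)).sub hsSQ)
    -- Ufun as a single series
    have hU : Ufun ρ = ∑' n, coW t n := by
      have : (fun n => coW t n) = fun n => (4*t*coA t n - 2*coC t n) - SQ n := by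
        funext n; rfl
      rw [this, Summable.tsum_sub ((hsA.mul_left (4*t)).sub (hsC.mul_left 2)) hsSQ,
        Summable.tsum_sub (hsA.mul_left (4*t)) (hsC.mul_left 2),
        tsum_mul_left, tsum_mul_left, hSQsum]
      have hρ4 : ρ = 4 * t := by rw [ht_def]; ring
      unfold Ufun
      rw [sq, sq, hA, hB, mul_assoc, hC, hρ4]
      ring
    rw [hU]
    have hW0 : 0 < coW t 0 := by
      rw [coW_eq]
      norm_num [Nat.factorial]
      positivity
    have hWnn : ∀ n, 0 ≤ coW t n := by
      intro n
      rw [coW_eq]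
      positivity
    calc 0 < coW t 0 := hW0
    _ ≤ ∑' n, coW t n := Summable.le_tsum hsW 0 (fun j _ => hWnn j)
end

section
/- Under the setup z_i = A a t_{1i} + A b t_{2i} + A h_2 n_i + η_i with t_{1i}, t_{2i} M-PSK symbols of powers P_1 = αP_2, P_2, and n_i, η_i independent zero-mean complex Gaussian noises with variance σ² each, independent across i and of the symbols, the mean squared error of â_g = (1/(N A P_1)) ∑ t_{1i}* z_i is E|â_g − a|² = |b|²/(Nα) + |h_2|²σ²/(NαP_2) + σ²/(N A² α P_2). -/
open MeasureTheory ProbabilityTheory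
open scoped ENNReal

lemma indep_integral_mul_complex {Ω : Type*} [MeasurableSpace Ω] {μ : Measure Ω} {f g : Ω → ℂ}
    (h : IndepFun f g μ) (hf : Integrable f μ) (hg : Integrable g μ) :
    ∫ ω, f ω * g ω ∂μ = (∫ ω, f ω ∂μ) * ∫ ω, g ω ∂μ := by
  have hmul : Integrable (f * g) μ := h.integrable_mul hf hg
  have hfr : Integrable (fun ω => (f ω).re) μ := hf.re
  have hfi : Integrable (fun ω => (f ω).im) μ := hf.im
  have hgr : Integrable (fun ω => (g ω).re) μ := hg.re
  have hgi : Integrable (fun ω => (g ω).im) μ := hg.im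
  have hrr : IndepFun (fun ω => (f ω).re) (fun ω => (g ω).re) μ :=
    h.comp Complex.measurable_re Complex.measurable_re
  have hri : IndepFun (fun ω => (f ω).re) (fun ω => (g ω).im) μ :=
    h.comp Complex.measurable_re Complex.measurable_im
  have hir : IndepFun (fun ω => (f ω).im) (fun ω => (g ω).re) μ :=
    h.comp Complex.measurable_im Complex.measurable_re
  have hii : IndepFun (fun ω => (f ω).im) (fun ω => (g ω).im) μ :=
    h.comp Complex.measurable_im Complex.measurable_im
  have Irr := hrr.integral_mul_eq_mul_integral hfr.1 hgr.1
  have Iri := hri.integral_mul_eq_mul_integral hfr.1 hgi.1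
  have Iir := hir.integral_mul_eq_mul_integral hfi.1 hgr.1
  have Iii := hii.integral_mul_eq_mul_integral hfi.1 hgi.1
  have Irr' : ∫ a, (f a).re * (g a).re ∂μ = (∫ ω, (f ω).re ∂μ) * ∫ ω, (g ω).re ∂μ := Irr
  have Iri' : ∫ a, (f a).re * (g a).im ∂μ = (∫ ω, (f ω).re ∂μ) * ∫ ω, (g ω).im ∂μ := Iri
  have Iir' : ∫ a, (f a).im * (g a).re ∂μ = (∫ ω, (f ω).im ∂μ) * ∫ ω, (g ω).re ∂μ := Iir
  have Iii' : ∫ a, (f a).im * (g a).im ∂μ = (∫ ω, (f ω).im ∂μ) * ∫ ω, (g ω).im ∂μ := Iii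
  have h1 : Integrable (fun ω => (f ω).re * (g ω).re) μ := hrr.integrable_mul hfr hgr
  have h2 : Integrable (fun ω => (f ω).re * (g ω).im) μ := hri.integrable_mul hfr hgi
  have h3 : Integrable (fun ω => (f ω).im * (g ω).re) μ := hir.integrable_mul hfi hgr
  have h4 : Integrable (fun ω => (f ω).im * (g ω).im) μ := hii.integrable_mul hfi hgi
  have hmul' : Integrable (fun ω => f ω * g ω) μ := hmul
  have keyre := integral_re (𝕜 := ℂ) hmul'
  have keyim := integral_im (𝕜 := ℂ) hmul'
  have hfre := integral_re (𝕜 := ℂ) hf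
  have hfim := integral_im (𝕜 := ℂ) hf
  have hgre := integral_re (𝕜 := ℂ) hg
  have hgim := integral_im (𝕜 := ℂ) hg
  simp only [RCLike.re_to_complex, RCLike.im_to_complex] at keyre keyim hfre hfim hgre hgim
  apply Complex.ext
  · rw [← keyre]
    simp only [Complex.mul_re]
    rw [integral_sub h1 h4, Irr', Iii', ← hfre, ← hfim, ← hgre, ← hgim]
  · rw [← keyim]
    simp only [Complex.mul_im]
    rw [integral_add h2 h3, Iri', Iir', ← hfre, ← hfim, ← hgre, ← hgim]

lemma integrable_conj' {Ω : Type*} [MeasurableSpace Ω] {μ : Measure Ω} {f : Ω → ℂ}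
    (hf : Integrable f μ) : Integrable (fun ω => (starRingEnd ℂ) (f ω)) μ := by
  refine ⟨continuous_star.comp_aestronglyMeasurable hf.1, ?_⟩
  simpa [HasFiniteIntegral] using hf.2

lemma sq_norm_eq {z : ℂ} : z * (starRingEnd ℂ) z = ((‖z‖ ^ 2 : ℝ) : ℂ) := by
  rw [Complex.mul_conj, Complex.normSq_eq_norm_sq]

lemma mse_sum {Ω : Type*} [MeasurableSpace Ω] (μ : Measure Ω) [IsProbabilityMeasure μ]
    {ι : Type*} [Fintype ι] (c : ι → ℂ) (U : ι → Ω → ℂ) (v : ι → ℝ)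
    (hInt : ∀ j, Integrable (U j) μ) (hMean : ∀ j, ∫ ω, U j ω ∂μ = 0)
    (hSq : ∀ j, Integrable (fun ω => ‖U j ω‖ ^ 2) μ)
    (hVar : ∀ j, ∫ ω, ‖U j ω‖ ^ 2 ∂μ = v j)
    (hpair : ∀ j k, j ≠ k → IndepFun (U j) (U k) μ) :
    ∫ ω, ‖∑ j, c j * U j ω‖ ^ 2 ∂μ = ∑ j, ‖c j‖ ^ 2 * v j := by
  classical
  have hdiag : ∀ j : ι, (fun ω => (c j * U j ω) * (starRingEnd ℂ) (c j * U j ω))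
      = fun ω => ((‖c j‖ ^ 2 : ℝ) : ℂ) * ((‖U j ω‖ ^ 2 : ℝ) : ℂ) := by
    intro j; funext ω
    rw [sq_norm_eq, norm_mul, mul_pow]
    push_cast; ring
  have hterm : ∀ j k : ι, Integrable
      (fun ω => (c j * U j ω) * (starRingEnd ℂ) (c k * U k ω)) μ := by
    intro j k
    by_cases hjk : j = k
    · subst hjk
      rw [hdiag j]
      exact (((hSq j).ofReal).const_mul _)
    · have hind : IndepFun (fun ω => c j * U j ω)
          (fun ω => (starRingEnd ℂ) (c k * U k ω)) μ :=
        (hpair j k hjk).comp (measurable_const_mul (c j))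
          (continuous_star.measurable.comp (measurable_const_mul (c k)))
      exact hind.integrable_mul ((hInt j).const_mul _)
        (integrable_conj' ((hInt k).const_mul (c k)))
  have hval : ∀ j k : ι, ∫ ω, (c j * U j ω) * (starRingEnd ℂ) (c k * U k ω) ∂μ
      = if j = k then ((‖c j‖ ^ 2 * v j : ℝ) : ℂ) else 0 := by
    intro j k
    by_cases hjk : j = k
    · subst hjk
      simp only [if_pos]
      rw [show (∫ ω, (c j * U j ω) * (starRingEnd ℂ) (c j * U j ω) ∂μ)
          = ∫ ω, ((‖c j‖ ^ 2 : ℝ) : ℂ) * ((‖U j ω‖ ^ 2 : ℝ) : ℂ) ∂μ by rw [hdiag j]]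
      rw [integral_const_mul, integral_complex_ofReal, hVar j]
      push_cast; ring
    · have hind : IndepFun (fun ω => c j * U j ω)
          (fun ω => (starRingEnd ℂ) (c k * U k ω)) μ :=
        (hpair j k hjk).comp (measurable_const_mul (c j))
          (continuous_star.measurable.comp (measurable_const_mul (c k)))
      rw [if_neg hjk,
        indep_integral_mul_complex hind ((hInt j).const_mul _)
          (integrable_conj' ((hInt k).const_mul (c k)))]
      have : ∫ ω, c j * U j ω ∂μ = 0 := by
        rw [integral_const_mul, hMean j, mul_zero]
      rw [this, zero_mul]
  have hpt : ∀ ω : Ω, ((‖∑ j, c j * U j ω‖ ^ 2 : ℝ) : ℂ)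
      = ∑ j, ∑ k, (c j * U j ω) * (starRingEnd ℂ) (c k * U k ω) := by
    intro ω
    rw [← Finset.sum_mul_sum, ← map_sum, sq_norm_eq]
  have key : ((∫ ω, ‖∑ j, c j * U j ω‖ ^ 2 ∂μ : ℝ) : ℂ)
      = ((∑ j, ‖c j‖ ^ 2 * v j : ℝ) : ℂ) := by
    rw [← integral_complex_ofReal]
    calc ∫ ω, ((‖∑ j, c j * U j ω‖ ^ 2 : ℝ) : ℂ) ∂μ
        = ∫ ω, ∑ j, ∑ k, (c j * U j ω) * (starRingEnd ℂ) (c k * U k ω) ∂μ := by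
          congr 1; funext ω; exact hpt ω
      _ = ∑ j, ∑ k, ∫ ω, (c j * U j ω) * (starRingEnd ℂ) (c k * U k ω) ∂μ := by
          rw [integral_finset_sum _ (fun j _ => integrable_finset_sum _ (fun k _ => hterm j k))]
          exact Finset.sum_congr rfl (fun j _ => integral_finset_sum _ (fun k _ => hterm j k))
      _ = ∑ j, ((‖c j‖ ^ 2 * v j : ℝ) : ℂ) := by
          refine Finset.sum_congr rfl (fun j _ => ?_)
          rw [Finset.sum_congr rfl (fun k _ => hval j k)]
          simp
      _ = ((∑ j, ‖c j‖ ^ 2 * v j : ℝ) : ℂ) := by push_cast; ring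
  exact_mod_cast key

lemma psk_sum_zero (M : ℕ) (hM : 2 ≤ M) :
    ∑ ℓ ∈ Finset.range M,
      Complex.exp (Complex.I * (((2 * (ℓ : ℝ) + 1) * Real.pi / M : ℝ) : ℂ)) = 0 := by
  have hM0 : (M : ℝ) ≠ 0 := by positivity
  have hMC : (M : ℂ) ≠ 0 := Nat.cast_ne_zero.mpr (by omega)
  set x : ℂ := Complex.exp (Complex.I * ((2 * Real.pi / M : ℝ) : ℂ)) with hxdef
  have hterm : ∀ ℓ ∈ Finset.range M,
      Complex.exp (Complex.I * (((2 * (ℓ : ℝ) + 1) * Real.pi / M : ℝ) : ℂ))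
        = Complex.exp (Complex.I * ((Real.pi / M : ℝ) : ℂ)) * x ^ ℓ := by
    intro ℓ _
    rw [hxdef, ← Complex.exp_nat_mul, ← Complex.exp_add]
    congr 1
    push_cast
    field_simp
    ring
  rw [Finset.sum_congr rfl hterm, ← Finset.mul_sum]
  have hx1 : x ≠ 1 := by
    rw [hxdef]
    intro h
    rw [Complex.exp_eq_one_iff] at h
    obtain ⟨n, hn⟩ := h
    have h2 : ((2 * Real.pi / M : ℝ) : ℂ) = (n : ℂ) * (2 * Real.pi) := by
      have := hn
      rw [mul_comm] at this
      have h3 : ((2 * Real.pi / M : ℝ) : ℂ) * Complex.I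
          = ((n : ℂ) * (2 * Real.pi)) * Complex.I := by
        rw [this]; ring
      exact mul_right_cancel₀ Complex.I_ne_zero h3
    have h4 : (2 * Real.pi / M : ℝ) = (n : ℝ) * (2 * Real.pi) := by exact_mod_cast h2
    have hpi := Real.pi_pos
    have hM2 : (2 : ℝ) ≤ M := by exact_mod_cast hM
    have hpos : 0 < 2 * Real.pi / M := by positivity
    have hle : 2 * Real.pi / M ≤ Real.pi := by
      rw [div_le_iff₀ (by positivity)]
      nlinarith
    rcases le_or_gt (n : ℝ) 0 with hn0 | hn0
    · nlinarith
    · have : (1 : ℝ) ≤ n := by exact_mod_cast (by exact_mod_cast hn0 : (0 : ℤ) < n)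
      nlinarith
  have hxM : x ^ M = 1 := by
    rw [hxdef, ← Complex.exp_nat_mul]
    rw [show (M : ℂ) * (Complex.I * ((2 * Real.pi / M : ℝ) : ℂ))
        = 2 * (Real.pi : ℂ) * Complex.I by push_cast; field_simp [hMC]]
    exact Complex.exp_two_pi_mul_I
  rw [geom_sum_eq hx1, hxM, sub_self, zero_div, mul_zero]

lemma psk_mean_zero {Ω : Type*} [MeasurableSpace Ω] {μ : Measure Ω} [IsProbabilityMeasure μ]
    {M : ℕ} (hM : 2 ≤ M) {φ : Ω → ℝ} (hφ : Measurable φ)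
    (hdist : Measure.map φ μ =
      ((M : ℝ≥0∞))⁻¹ • ∑ ℓ ∈ Finset.range M,
        Measure.dirac ((2 * (ℓ : ℝ) + 1) * Real.pi / M)) :
    ∫ ω, Complex.exp (Complex.I * ((φ ω : ℝ) : ℂ)) ∂μ = 0 := by
  have hg : Continuous fun x : ℝ => Complex.exp (Complex.I * (x : ℂ)) := by
    continuity
  have h1 : ∫ ω, Complex.exp (Complex.I * ((φ ω : ℝ) : ℂ)) ∂μ
      = ∫ x, Complex.exp (Complex.I * (x : ℂ)) ∂(Measure.map φ μ) := by
    rw [integral_map hφ.aemeasurable hg.aestronglyMeasurable]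
  rw [h1, hdist, integral_smul_measure]
  have hint : ∀ ℓ ∈ Finset.range M, Integrable (fun x : ℝ => Complex.exp (Complex.I * (x : ℂ)))
      (Measure.dirac ((2 * (ℓ : ℝ) + 1) * Real.pi / M)) := by
    intro ℓ _
    refine Integrable.mono' (integrable_const 1) hg.aestronglyMeasurable ?_
    filter_upwards with x
    rw [Complex.norm_exp]
    simp [Complex.mul_re]
  rw [integral_finset_sum_measure hint]
  have : ∀ ℓ ∈ Finset.range M, ∫ x, Complex.exp (Complex.I * (x : ℂ))
      ∂(Measure.dirac ((2 * (ℓ : ℝ) + 1) * Real.pi / M))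
      = Complex.exp (Complex.I * (((2 * (ℓ : ℝ) + 1) * Real.pi / M : ℝ) : ℂ)) := by
    intro ℓ _
    exact integral_dirac _ _
  rw [Finset.sum_congr rfl this, psk_sum_zero M hM, smul_zero]

theorem gml_mse {Ω : Type*} [MeasurableSpace Ω] (μ : Measure Ω) [IsProbabilityMeasure μ]
    (N M : ℕ) (hN : 0 < N) (hM : 2 ≤ M)
    (A α P1 P2 σ : ℝ) (hA : 0 < A) (hα : 0 < α) (hP2 : 0 < P2) (hσ : 0 < σ)
    (hP1 : P1 = α * P2)
    (a b h2 : ℂ) (φ1 : Fin N → ℝ) (φ2 : Fin N → Ω → ℝ) (n η : Fin N → Ω → ℂ)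
    (hφ2meas : ∀ i, Measurable (φ2 i))
    -- each φ2 i is uniform on the M-PSK phase set {(2ℓ−1)π/M : ℓ = 1,…,M}
    (hφ2dist : ∀ i, Measure.map (φ2 i) μ =
      ((M : ℝ≥0∞))⁻¹ • ∑ ℓ ∈ Finset.range M,
        Measure.dirac ((2 * (ℓ : ℝ) + 1) * Real.pi / M))
    -- the phases and the two noise families are mutually independent across all indices
    (X : (Fin N ⊕ Fin N ⊕ Fin N) → Ω → ℂ)
    (hX : X = Sum.elim (fun i ω => ((φ2 i ω : ℝ) : ℂ)) (Sum.elim n η))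
    (hindep : iIndepFun X μ)
    -- zero-mean noises with variance σ² each
    (hnInt : ∀ i, Integrable (n i) μ) (hnMean : ∀ i, ∫ ω, n i ω ∂μ = 0)
    (hnVar : ∀ i, ∫ ω, ‖n i ω‖ ^ 2 ∂μ = σ ^ 2)
    (hηInt : ∀ i, Integrable (η i) μ) (hηMean : ∀ i, ∫ ω, η i ω ∂μ = 0)
    (hηVar : ∀ i, ∫ ω, ‖η i ω‖ ^ 2 ∂μ = σ ^ 2)
    (hnSq : ∀ i, Integrable (fun ω => ‖n i ω‖ ^ 2) μ)
    (hηSq : ∀ i, Integrable (fun ω => ‖η i ω‖ ^ 2) μ)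
    (t1 : Fin N → ℂ)
    (ht1 : ∀ i, t1 i = (Real.sqrt P1 : ℂ) * Complex.exp (Complex.I * ((φ1 i : ℝ) : ℂ)))
    (t2 : Fin N → Ω → ℂ)
    (ht2 : ∀ i ω, t2 i ω = (Real.sqrt P2 : ℂ) * Complex.exp (Complex.I * ((φ2 i ω : ℝ) : ℂ)))
    (z : Fin N → Ω → ℂ)
    (hz : ∀ i ω, z i ω = (A : ℂ) * a * t1 i + (A : ℂ) * b * t2 i ω
        + (A : ℂ) * h2 * n i ω + η i ω) :
    ∫ ω, ‖((1 / ((N : ℂ) * (A : ℂ) * (P1 : ℂ))) *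
          ∑ i, (starRingEnd ℂ) (t1 i) * z i ω) - a‖ ^ 2 ∂μ
      = ‖b‖ ^ 2 / (N * α) + ‖h2‖ ^ 2 * σ ^ 2 / (N * α * P2)
        + σ ^ 2 / (N * A ^ 2 * α * P2) := by
  classical
  have hP1pos : 0 < P1 := by rw [hP1]; positivity
  have hNR : (0 : ℝ) < N := by exact_mod_cast hN
  have hNC : ((N : ℂ)) ≠ 0 := Nat.cast_ne_zero.mpr hN.ne'
  have hAC : ((A : ℂ)) ≠ 0 := Complex.ofReal_ne_zero.mpr hA.ne'
  have hP1C : ((P1 : ℂ)) ≠ 0 := Complex.ofReal_ne_zero.mpr hP1pos.ne'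
  set K : ℂ := 1 / ((N : ℂ) * (A : ℂ) * (P1 : ℂ)) with hK
  -- coefficient and variable families
  set c : (Fin N ⊕ Fin N ⊕ Fin N) → ℂ :=
    Sum.elim (fun i => K * ((A : ℂ) * b * (starRingEnd ℂ) (t1 i) * (Real.sqrt P2 : ℂ)))
      (Sum.elim (fun i => K * ((A : ℂ) * h2 * (starRingEnd ℂ) (t1 i)))
        (fun i => K * (starRingEnd ℂ) (t1 i))) with hc
  set U : (Fin N ⊕ Fin N ⊕ Fin N) → Ω → ℂ :=
    Sum.elim (fun i ω => Complex.exp (Complex.I * ((φ2 i ω : ℝ) : ℂ))) (Sum.elim n η) with hU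
  set v : (Fin N ⊕ Fin N ⊕ Fin N) → ℝ :=
    Sum.elim (fun _ => 1) (Sum.elim (fun _ => σ ^ 2) (fun _ => σ ^ 2)) with hv
  -- basic facts about t1
  have ht1norm : ∀ i, ‖t1 i‖ = Real.sqrt P1 := by
    intro i
    rw [ht1 i, norm_mul, Complex.norm_real, Real.norm_eq_abs,
      abs_of_nonneg (Real.sqrt_nonneg _), Complex.norm_exp]
    simp [Complex.mul_re]
  have ht1sq : ∀ i, (starRingEnd ℂ) (t1 i) * t1 i = (P1 : ℂ) := by
    intro i
    rw [mul_comm, sq_norm_eq, ht1norm i, Real.sq_sqrt hP1pos.le]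
  -- U written as composition with the coordinates X
  have hUcomp : ∀ j, U j = (Sum.elim (fun (_ : Fin N) (w : ℂ) => Complex.exp (Complex.I * w))
      (Sum.elim (fun (_ : Fin N) => (id : ℂ → ℂ)) (fun (_ : Fin N) => (id : ℂ → ℂ))) j) ∘ X j := by
    intro j
    rcases j with i | i | i <;> funext ω <;> simp [hU, hX]
  have hgmeas : ∀ j, Measurable (Sum.elim (fun (_ : Fin N) (w : ℂ) => Complex.exp (Complex.I * w))
      (Sum.elim (fun (_ : Fin N) => (id : ℂ → ℂ)) (fun (_ : Fin N) => (id : ℂ → ℂ))) j) := by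
    intro j
    rcases j with i | i | i
    · exact Complex.measurable_exp.comp (measurable_const.mul measurable_id)
    · exact measurable_id
    · exact measurable_id
  have hpair : ∀ j k, j ≠ k → IndepFun (U j) (U k) μ := by
    intro j k hjk
    rw [hUcomp j, hUcomp k]
    exact (hindep.indepFun hjk).comp (hgmeas j) (hgmeas k)
  -- norm of the exponential is 1
  have hexpnorm : ∀ (x : ℝ), ‖Complex.exp (Complex.I * (x : ℂ))‖ = 1 := by
    intro x
    rw [Complex.norm_exp]
    simp [Complex.mul_re]
  -- integrability, means, variances
  have hInt : ∀ j, Integrable (U j) μ := by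
    intro j
    rcases j with i | i | i
    · refine Integrable.mono' (integrable_const 1) ?_ ?_
      · exact ((Complex.measurable_exp.comp (measurable_const.mul
          (Complex.measurable_ofReal.comp (hφ2meas i))))).aestronglyMeasurable
      · filter_upwards with ω
        simp only [hU, Sum.elim_inl]
        rw [hexpnorm]
    · exact hnInt i
    · exact hηInt i
  have hMean : ∀ j, ∫ ω, U j ω ∂μ = 0 := by
    intro j
    rcases j with i | i | i
    · exact psk_mean_zero hM (hφ2meas i) (hφ2dist i)
    · exact hnMean i
    · exact hηMean i
  have hSq : ∀ j, Integrable (fun ω => ‖U j ω‖ ^ 2) μ := by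
    intro j
    rcases j with i | i | i
    · have : (fun ω => ‖U (Sum.inl i) ω‖ ^ 2) = fun _ => (1 : ℝ) := by
        funext ω; simp only [hU, Sum.elim_inl]; rw [hexpnorm]; norm_num
      rw [this]; exact integrable_const 1
    · exact hnSq i
    · exact hηSq i
  have hVar : ∀ j, ∫ ω, ‖U j ω‖ ^ 2 ∂μ = v j := by
    intro j
    rcases j with i | i | i
    · have : (fun ω => ‖U (Sum.inl i) ω‖ ^ 2) = fun _ => (1 : ℝ) := by
        funext ω; simp only [hU, Sum.elim_inl]; rw [hexpnorm]; norm_num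
      rw [this]; simp [hv]
    · exact hnVar i
    · exact hηVar i
  -- pointwise decomposition of the estimator error
  have hdecomp : ∀ ω, (K * ∑ i, (starRingEnd ℂ) (t1 i) * z i ω) - a
      = ∑ j, c j * U j ω := by
    intro ω
    have hzi : ∀ i, (starRingEnd ℂ) (t1 i) * z i ω
        = (A : ℂ) * a * (P1 : ℂ)
          + ((A : ℂ) * b * (starRingEnd ℂ) (t1 i) * (Real.sqrt P2 : ℂ))
              * Complex.exp (Complex.I * ((φ2 i ω : ℝ) : ℂ))
          + ((A : ℂ) * h2 * (starRingEnd ℂ) (t1 i)) * n i ω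
          + (starRingEnd ℂ) (t1 i) * η i ω := by
      intro i
      rw [hz i ω, ht2 i ω]
      linear_combination (A : ℂ) * a * ht1sq i
    rw [Fintype.sum_sum_type, Fintype.sum_sum_type]
    simp only [hc, hU, hv, Sum.elim_inl, Sum.elim_inr]
    rw [Finset.sum_congr rfl (fun i _ => hzi i)]
    simp only [Finset.sum_add_distrib, Finset.sum_const, Finset.card_univ, Fintype.card_fin,
      nsmul_eq_mul]
    have hKN : K * ((N : ℂ) * ((A : ℂ) * a * (P1 : ℂ))) = a := by
      rw [hK]; field_simp
    rw [mul_add, mul_add, mul_add, hKN]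
    rw [Finset.mul_sum, Finset.mul_sum, Finset.mul_sum]
    ring_nf
    rw [show (∑ x, K * (A : ℂ) * b * (starRingEnd ℂ) (t1 x) * (Real.sqrt P2 : ℂ)
        * Complex.exp (Complex.I * ((φ2 x ω : ℝ) : ℂ)))
        = ∑ x, K * (A : ℂ) * b * (Real.sqrt P2 : ℂ) * (starRingEnd ℂ) (t1 x)
        * Complex.exp (Complex.I * ((φ2 x ω : ℝ) : ℂ)) from
        Finset.sum_congr rfl (fun x _ => by ring)]
    ring
  -- apply the key lemma
  have hmain : ∫ ω, ‖(K * ∑ i, (starRingEnd ℂ) (t1 i) * z i ω) - a‖ ^ 2 ∂μ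
      = ∑ j, ‖c j‖ ^ 2 * v j := by
    rw [show (fun ω => ‖(K * ∑ i, (starRingEnd ℂ) (t1 i) * z i ω) - a‖ ^ 2)
        = fun ω => ‖∑ j, c j * U j ω‖ ^ 2 by funext ω; rw [hdecomp ω]]
    exact mse_sum μ c U v hInt hMean hSq hVar hpair
  rw [hmain]
  -- compute the sum of squared coefficients
  have hKnorm : ‖K‖ = 1 / (N * A * P1) := by
    rw [hK]
    rw [show ((N : ℂ) * (A : ℂ) * (P1 : ℂ)) = ((N * A * P1 : ℝ) : ℂ) by push_cast; ring]
    rw [norm_div, norm_one, Complex.norm_real, Real.norm_eq_abs,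
      abs_of_pos (by positivity)]
  have hconjnorm : ∀ i, ‖(starRingEnd ℂ) (t1 i)‖ = Real.sqrt P1 := by
    intro i
    rw [RCLike.norm_conj, ht1norm i]
  rw [Fintype.sum_sum_type, Fintype.sum_sum_type]
  simp only [hc, hv, Sum.elim_inl, Sum.elim_inr]
  have e1 : ∀ i : Fin N, ‖K * ((A : ℂ) * b * (starRingEnd ℂ) (t1 i) * (Real.sqrt P2 : ℂ))‖ ^ 2
      * (1 : ℝ) = (1 / (N * A * P1)) ^ 2 * A ^ 2 * ‖b‖ ^ 2 * P1 * P2 := by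
    intro i
    rw [norm_mul, norm_mul, norm_mul, norm_mul, hKnorm, hconjnorm i]
    rw [Complex.norm_real A, Real.norm_eq_abs, abs_of_pos hA]
    rw [Complex.norm_real (Real.sqrt P2), Real.norm_eq_abs,
      abs_of_nonneg (Real.sqrt_nonneg _)]
    rw [mul_one]
    rw [show (1 / (N * A * P1) * (A * ‖b‖ * Real.sqrt P1 * Real.sqrt P2)) ^ 2
        = (1 / (N * A * P1)) ^ 2 * A ^ 2 * ‖b‖ ^ 2 * (Real.sqrt P1) ^ 2 * (Real.sqrt P2) ^ 2
        by ring]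
    rw [Real.sq_sqrt hP1pos.le, Real.sq_sqrt hP2.le]
  have e2 : ∀ i : Fin N, ‖K * ((A : ℂ) * h2 * (starRingEnd ℂ) (t1 i))‖ ^ 2 * σ ^ 2
      = (1 / (N * A * P1)) ^ 2 * A ^ 2 * ‖h2‖ ^ 2 * P1 * σ ^ 2 := by
    intro i
    rw [norm_mul, norm_mul, norm_mul, hKnorm, hconjnorm i]
    rw [Complex.norm_real A, Real.norm_eq_abs, abs_of_pos hA]
    rw [show (1 / (N * A * P1) * (A * ‖h2‖ * Real.sqrt P1)) ^ 2
        = (1 / (N * A * P1)) ^ 2 * A ^ 2 * ‖h2‖ ^ 2 * (Real.sqrt P1) ^ 2 by ring]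
    rw [Real.sq_sqrt hP1pos.le]
  have e3 : ∀ i : Fin N, ‖K * (starRingEnd ℂ) (t1 i)‖ ^ 2 * σ ^ 2
      = (1 / (N * A * P1)) ^ 2 * P1 * σ ^ 2 := by
    intro i
    rw [norm_mul, hKnorm, hconjnorm i]
    rw [show (1 / (N * A * P1) * Real.sqrt P1) ^ 2
        = (1 / (N * A * P1)) ^ 2 * (Real.sqrt P1) ^ 2 by ring]
    rw [Real.sq_sqrt hP1pos.le]
  rw [Finset.sum_congr rfl (fun i _ => e1 i), Finset.sum_congr rfl (fun i _ => e2 i),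
    Finset.sum_congr rfl (fun i _ => e3 i)]
  simp only [Finset.sum_const, Finset.card_univ, Fintype.card_fin, nsmul_eq_mul]
  rw [hP1]
  field_simp
  ring
end
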